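/- (Godsil–McKay switching) Let G be a finite simple graph and let π = {C_1, …, C_t, D} be a partition of its vertex set with |C_i| = n_i such that: (1) for each 1 ≤ i, j ≤ t, any two vertices in C_i have the same number of neighbors in C_j; and (2) every vertex v ∈ D has either 0, n_i/2, or n_i neighbors in C_i, for each i. Let G^π be the graph obtained from G as follows: for every v ∈ D and every i such that v has exactly n_i/2 neighbors in C_i, delete those n_i/2 edges and join v instead to the remaining n_i/2 vertices of C_i; all other adjacencies are unchanged. Then the adjacency matrices of G and G^π have the same characteristic polynomial. -/

import Mathlib

open Matrix Polynomial

lemma charpoly_conj_aux {n R : Type*} [CommRing R] [Fintype n] [DecidableEq n]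
    (Q A : Matrix n n R) (hQ : Q * Q = 1) : (Q * A * Q).charpoly = A.charpoly := by
  have hmapQ : Q.map (C : R →+* R[X]) * Q.map C = 1 := by
    rw [← Matrix.map_mul, hQ]; simp
  have hQs : ∀ M : Matrix n n R[X], M * Matrix.scalar n (X : R[X]) = Matrix.scalar n X * M := by
    intro M
    ext i j
    simp [Matrix.mul_apply, Matrix.scalar_apply, Matrix.diagonal, mul_comm]
  have hch : charmatrix (Q * A * Q) = Q.map C * charmatrix A * Q.map C := by
    simp only [charmatrix, RingHom.mapMatrix_apply]
    rw [Matrix.mul_sub, Matrix.sub_mul, hQs, Matrix.mul_assoc ((Matrix.scalar n) X), hmapQ,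
      mul_one, Matrix.map_mul, Matrix.map_mul]
  have hdet : (Q.map (C : R →+* R[X])).det * (Q.map C).det = 1 := by
    rw [← det_mul, hmapQ, det_one]
  rw [Matrix.charpoly, Matrix.charpoly, hch, det_mul, det_mul, mul_comm, ← mul_assoc, hdet, one_mul]

lemma gm_ring_aux (p q a b x : ℝ) (hp : p ≠ 0) (hq : q ≠ 0) (key : p * b = q * a) :
    2 / q * (2 / p * (q * a) - b) - (2 / p * a - x) = x := by
  field_simp
  linear_combination (-2) * key

/-- The Godsil–McKay switching matrix. -/
noncomputable def gmQ {V : Type*} [DecidableEq V] {t : ℕ} (C : Fin t → Finset V) (D : Finset V) :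
    Matrix V V ℝ := fun u v =>
  (if u = v then (if u ∈ D then (1 : ℝ) else -1) else 0)
    + ∑ i, if u ∈ C i ∧ v ∈ C i then 2 / ((C i).card : ℝ) else 0

set_option maxHeartbeats 1000000 in
/-- **Godsil–McKay switching.** If `π = {C 1, …, C t, D}` is a partition of the vertex
set of a finite simple graph `G` such that (1) any two vertices of `C i` have the same
number of neighbours in `C j`, and (2) every `v ∈ D` has `0`, `n i / 2` or `n i`
neighbours in `C i` (where `n i = |C i|`), then the graph `G'` obtained by flipping the
adjacencies between each `v ∈ D` and each part `C i` in which `v` has exactly `n i / 2`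
neighbours is cospectral with `G`. -/
theorem godsil_mckay_switching {V : Type*} [Fintype V] [DecidableEq V]
    (G G' : SimpleGraph V) [DecidableRel G.Adj] [DecidableRel G'.Adj]
    (t : ℕ) (C : Fin t → Finset V) (D : Finset V)
    -- `π = {C 1, …, C t, D}` is a partition of the vertex set
    (hCC : ∀ i j, i ≠ j → Disjoint (C i) (C j))
    (hCD : ∀ i, Disjoint (C i) D)
    (hcover : ∀ v, v ∈ D ∨ ∃ i, v ∈ C i)
    -- (1): any two vertices of `C i` have the same number of neighbours in `C j`
    (hequit : ∀ i j, ∀ u ∈ C i, ∀ v ∈ C i,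
      ((C j).filter (fun w => G.Adj u w)).card =
        ((C j).filter (fun w => G.Adj v w)).card)
    -- (2): every `v ∈ D` has `0`, `n i / 2` or `n i` neighbours in `C i`
    (hD : ∀ v ∈ D, ∀ i,
      ((C i).filter (fun w => G.Adj v w)).card = 0 ∨
      2 * ((C i).filter (fun w => G.Adj v w)).card = (C i).card ∨
      ((C i).filter (fun w => G.Adj v w)).card = (C i).card)
    -- `G'` is obtained from `G` by local switching: the adjacency between `u` and `v`
    -- is flipped exactly when one of them lies in `D`, the other lies in a part `C i`,
    -- and the vertex in `D` has exactly `n i / 2` neighbours in `C i`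
    (hG' : ∀ u v, G'.Adj u v ↔
      Xor'
        (∃ i,
          (u ∈ D ∧ v ∈ C i ∧
            2 * ((C i).filter (fun w => G.Adj u w)).card = (C i).card) ∨
          (v ∈ D ∧ u ∈ C i ∧
            2 * ((C i).filter (fun w => G.Adj v w)).card = (C i).card))
        (G.Adj u v)) :
    (G.adjMatrix ℝ).charpoly = (G'.adjMatrix ℝ).charpoly := by
  classical
  set A : Matrix V V ℝ := G.adjMatrix ℝ with hA
  set A' : Matrix V V ℝ := G'.adjMatrix ℝ with hA'
  set Q : Matrix V V ℝ := gmQ C D with hQ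
  -- degrees, as real numbers
  set d : V → Fin t → ℝ := fun v i => (((C i).filter (fun w => G.Adj v w)).card : ℝ) with hd
  have hAdef : ∀ u v, A u v = if G.Adj u v then (1 : ℝ) else 0 := fun u v => by
    simp [hA]
  have hA'def : ∀ u v, A' u v = if G'.Adj u v then (1 : ℝ) else 0 := fun u v => by
    simp [hA']
  -- partition basics
  have hCD' : ∀ {i u}, u ∈ C i → u ∉ D := fun {i u} h hD' =>
    Finset.disjoint_left.mp (hCD i) h hD'
  have hDC : ∀ {u}, u ∈ D → ∀ i, u ∉ C i := fun {u} h i hC =>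
    Finset.disjoint_left.mp (hCD i) hC h
  have huniq : ∀ {u : V} {i j}, u ∈ C i → u ∈ C j → i = j := by
    intro u i j h1 h2
    by_contra hne
    exact Finset.disjoint_left.mp (hCC i j hne) h1 h2
  have hnz : ∀ {i u}, u ∈ C i → ((C i).card : ℝ) ≠ 0 := by
    intro i u hu
    exact_mod_cast Finset.card_ne_zero_of_mem hu
  -- rows of Q
  have hQD : ∀ {u}, u ∈ D → ∀ x, Q u x = if u = x then 1 else 0 := by
    intro u hu x
    have h0 : (∑ i, if u ∈ C i ∧ x ∈ C i then 2 / ((C i).card : ℝ) else 0) = 0 :=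
      Finset.sum_eq_zero fun i _ => if_neg fun h => hDC hu i h.1
    simp [hQ, gmQ, h0, hu]
  have hQC : ∀ {i u}, u ∈ C i → ∀ x,
      Q u x = (if x ∈ C i then 2 / ((C i).card : ℝ) else 0) - (if u = x then 1 else 0) := by
    intro i u hu x
    have hnd : u ∉ D := hCD' hu
    have hsum : (∑ j, if u ∈ C j ∧ x ∈ C j then 2 / ((C j).card : ℝ) else 0)
        = if x ∈ C i then 2 / ((C i).card : ℝ) else 0 := by
      rw [Finset.sum_eq_single i]
      · simp [hu]
      · intro j _ hj
        exact if_neg fun h => hj (huniq h.1 hu)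
      · simp
    simp only [hQ, gmQ, hsum, hnd, if_false]
    split_ifs <;> ring
  have hQsym : ∀ u v, Q u v = Q v u := by
    intro u v
    simp only [hQ, gmQ]
    congr 1
    · rcases eq_or_ne u v with rfl | h
      · rfl
      · simp [h, h.symm]
    · exact Finset.sum_congr rfl fun i _ => if_congr and_comm rfl rfl
  -- sums of adjacency entries over a part
  have hsumA : ∀ v i, (∑ x ∈ C i, A x v) = d v i := by
    intro v i
    have : ∀ x, A x v = if G.Adj v x then (1 : ℝ) else 0 := fun x => by
      rw [hAdef]; simp [G.adj_comm]
    rw [Finset.sum_congr rfl fun x _ => this x, Finset.sum_boole]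
  have hsumA2 : ∀ u i, (∑ y ∈ C i, A u y) = d u i := by
    intro u i
    simp [hAdef, Finset.sum_boole, hd]
  -- left multiplication by Q
  have hQmulD : ∀ (B : Matrix V V ℝ) {u}, u ∈ D → ∀ v, (Q * B) u v = B u v := by
    intro B u hu v
    rw [Matrix.mul_apply]
    simp [hQD hu, ite_mul, Finset.sum_ite_eq]
  have hQmulC : ∀ (B : Matrix V V ℝ) {i u}, u ∈ C i → ∀ v,
      (Q * B) u v = 2 / ((C i).card : ℝ) * (∑ x ∈ C i, B x v) - B u v := by
    intro B i u hu v
    rw [Matrix.mul_apply]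
    have h1 : ∀ x, Q u x * B x v =
        (if x ∈ C i then 2 / ((C i).card : ℝ) * B x v else 0) -
          (if u = x then B x v else 0) := by
      intro x
      rw [hQC hu]
      split_ifs <;> ring
    rw [Finset.sum_congr rfl fun x _ => h1 x, Finset.sum_sub_distrib,
      Finset.sum_ite_eq, if_pos (Finset.mem_univ u)]
    congr 1
    rw [Finset.sum_ite_mem, Finset.univ_inter, Finset.mul_sum]
  -- right multiplication by Q
  have hmulQD : ∀ (B : Matrix V V ℝ) {v}, v ∈ D → ∀ u, (B * Q) u v = B u v := by
    intro B v hv u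
    rw [Matrix.mul_apply]
    have : ∀ y, Q y v = if v = y then 1 else 0 := fun y => by rw [hQsym, hQD hv]
    simp [this, mul_ite, Finset.sum_ite_eq]
  have hmulQC : ∀ (B : Matrix V V ℝ) {j v}, v ∈ C j → ∀ u,
      (B * Q) u v = 2 / ((C j).card : ℝ) * (∑ y ∈ C j, B u y) - B u v := by
    intro B j v hv u
    rw [Matrix.mul_apply]
    have h1 : ∀ y, B u y * Q y v =
        (if y ∈ C j then 2 / ((C j).card : ℝ) * B u y else 0) -
          (if v = y then B u y else 0) := by
      intro y
      rw [hQsym, hQC hv]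
      split_ifs <;> ring
    rw [Finset.sum_congr rfl fun y _ => h1 y, Finset.sum_sub_distrib,
      Finset.sum_ite_eq, if_pos (Finset.mem_univ v)]
    congr 1
    rw [Finset.sum_ite_mem, Finset.univ_inter, Finset.mul_sum]
  -- Q is an involution
  have hQQ : Q * Q = 1 := by
    ext u v
    rcases hcover u with hu | ⟨i, hu⟩
    · rw [hQmulD Q hu v, hQD hu, Matrix.one_apply]
    · rw [hQmulC Q hu v, hQC hu v]
      have hs : (∑ x ∈ C i, Q x v) = if v ∈ C i then 1 else 0 := by
        have : ∀ x ∈ C i, Q x v =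
            (if v ∈ C i then 2 / ((C i).card : ℝ) else 0) - (if x = v then 1 else 0) :=
          fun x hx => hQC hx v
        rw [Finset.sum_congr rfl this, Finset.sum_sub_distrib, Finset.sum_const,
          Finset.sum_ite_eq' (C i) v fun _ => (1 : ℝ)]
        split_ifs with h
        · rw [nsmul_eq_mul, mul_div_cancel₀ _ (hnz hu)]
          norm_num
        · simp
      rw [hs, Matrix.one_apply]
      split_ifs <;> ring
  -- flip / no-flip evaluation of A'
  have hflip : ∀ u v,
      (∃ i,
        (u ∈ D ∧ v ∈ C i ∧
          2 * ((C i).filter (fun w => G.Adj u w)).card = (C i).card) ∨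
        (v ∈ D ∧ u ∈ C i ∧
          2 * ((C i).filter (fun w => G.Adj v w)).card = (C i).card)) →
      A' u v = 1 - A u v := by
    intro u v h
    have hGG : G'.Adj u v ↔ ¬ G.Adj u v := by rw [hG']; simp [Xor', h]
    rw [hA'def, hAdef]
    by_cases hadj : G.Adj u v <;> simp [hGG, hadj]
  have hnoflip : ∀ u v,
      (¬ ∃ i,
        (u ∈ D ∧ v ∈ C i ∧
          2 * ((C i).filter (fun w => G.Adj u w)).card = (C i).card) ∨
        (v ∈ D ∧ u ∈ C i ∧
          2 * ((C i).filter (fun w => G.Adj v w)).card = (C i).card)) →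
      A' u v = A u v := by
    intro u v h
    have hGG : G'.Adj u v ↔ G.Adj u v := by rw [hG']; simp [Xor', h]
    rw [hA'def, hAdef, if_congr hGG rfl rfl]
  -- the main computation
  have hQAQ : Q * A * Q = A' := by
    ext u v
    rcases hcover u with hu | ⟨i, hu⟩ <;> rcases hcover v with hv | ⟨j, hv⟩
    · -- u ∈ D, v ∈ D
      rw [hmulQD (Q*A) hv u, hQmulD A hu v, hnoflip u v ?_]
      rintro ⟨i, ⟨_, hvC, _⟩ | ⟨_, huC, _⟩⟩
      · exact hDC hv i hvC
      · exact hDC hu i huC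
    · -- u ∈ D, v ∈ C j
      have hL : (Q * A * Q) u v = 2 / ((C j).card : ℝ) * d u j - A u v := by
        rw [hmulQC (Q*A) hv u,
          Finset.sum_congr rfl (fun y (_ : y ∈ C j) => hQmulD A hu y), hsumA2 u j,
          hQmulD A hu v]
      rcases hD u hu j with h0 | h2 | hn
      · have hdz : d u j = 0 := by simp [hd, h0]
        have hnadj : ¬ G.Adj u v := by
          intro hadj
          have hmem : v ∈ (C j).filter (fun w => G.Adj u w) := Finset.mem_filter.mpr ⟨hv, hadj⟩
          rw [Finset.card_eq_zero.mp h0] at hmem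
          exact absurd hmem (Finset.notMem_empty v)
        have hAuv : A u v = 0 := by rw [hAdef, if_neg hnadj]
        rw [hL, hnoflip u v ?_, hdz, hAuv]
        · ring
        rintro ⟨i, ⟨_, hvC, h2'⟩ | ⟨hvD, _, _⟩⟩
        · rcases huniq hvC hv with rfl
          have hpos := Finset.card_pos.mpr ⟨v, hv⟩
          omega
        · exact hCD' hv hvD
      · have hone : 2 / ((C j).card : ℝ) * d u j = 1 := by
          have h2R : 2 * d u j = ((C j).card : ℝ) := by
            simp only [hd]; exact_mod_cast h2
          field_simp [hnz hv]
          linarith [h2R]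
        rw [hL, hflip u v ⟨j, Or.inl ⟨hu, hv, h2⟩⟩, hone]
      · have hfil : (C j).filter (fun w => G.Adj u w) = C j :=
          Finset.eq_of_subset_of_card_le (Finset.filter_subset _ _) (le_of_eq hn.symm)
        have hadj : G.Adj u v := (Finset.mem_filter.mp (hfil ▸ hv)).2
        have hAuv : A u v = 1 := by rw [hAdef, if_pos hadj]
        have hdn : d u j = ((C j).card : ℝ) := by simp [hd, hn]
        rw [hL, hnoflip u v ?_, hdn, hAuv, div_mul_cancel₀ _ (hnz hv)]
        · norm_num
        rintro ⟨i, ⟨_, hvC, h2'⟩ | ⟨hvD, _, _⟩⟩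
        · rcases huniq hvC hv with rfl
          have hpos := Finset.card_pos.mpr ⟨v, hv⟩
          omega
        · exact hCD' hv hvD
    · -- u ∈ C i, v ∈ D
      have hL : (Q * A * Q) u v = 2 / ((C i).card : ℝ) * d v i - A u v := by
        rw [hmulQD (Q*A) hv u, hQmulC A hu v, hsumA v i]
      rcases hD v hv i with h0 | h2 | hn
      · have hdz : d v i = 0 := by simp [hd, h0]
        have hnadj : ¬ G.Adj u v := by
          intro hadj
          have hmem : u ∈ (C i).filter (fun w => G.Adj v w) :=
            Finset.mem_filter.mpr ⟨hu, hadj.symm⟩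
          rw [Finset.card_eq_zero.mp h0] at hmem
          exact absurd hmem (Finset.notMem_empty u)
        have hAuv : A u v = 0 := by rw [hAdef, if_neg hnadj]
        rw [hL, hnoflip u v ?_, hdz, hAuv]
        · ring
        rintro ⟨i', ⟨huD, _, _⟩ | ⟨_, huC, h2'⟩⟩
        · exact hCD' hu huD
        · rcases huniq huC hu with rfl
          have hpos := Finset.card_pos.mpr ⟨u, hu⟩
          omega
      · have hone : 2 / ((C i).card : ℝ) * d v i = 1 := by
          have h2R : 2 * d v i = ((C i).card : ℝ) := by
            simp only [hd]; exact_mod_cast h2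
          field_simp [hnz hu]
          linarith [h2R]
        rw [hL, hflip u v ⟨i, Or.inr ⟨hv, hu, h2⟩⟩, hone]
      · have hfil : (C i).filter (fun w => G.Adj v w) = C i :=
          Finset.eq_of_subset_of_card_le (Finset.filter_subset _ _) (le_of_eq hn.symm)
        have hadj : G.Adj u v := ((Finset.mem_filter.mp (hfil ▸ hu)).2).symm
        have hAuv : A u v = 1 := by rw [hAdef, if_pos hadj]
        have hdn : d v i = ((C i).card : ℝ) := by simp [hd, hn]
        rw [hL, hnoflip u v ?_, hdn, hAuv, div_mul_cancel₀ _ (hnz hu)]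
        · norm_num
        rintro ⟨i', ⟨huD, _, _⟩ | ⟨_, huC, h2'⟩⟩
        · exact hCD' hu huD
        · rcases huniq huC hu with rfl
          have hpos := Finset.card_pos.mpr ⟨u, hu⟩
          omega
    · -- u ∈ C i, v ∈ C j
      have hQAu : ∀ y, (Q * A) u y = 2 / ((C i).card : ℝ) * d y i - A u y := fun y => by
        rw [hQmulC A hu y, hsumA y i]
      have hsum1 : (∑ y ∈ C j, d y i) = ((C j).card : ℝ) * d v i := by
        rw [Finset.sum_congr rfl (fun y hy => show d y i = d v i by
          simp only [hd]; exact_mod_cast hequit j i y hy v hv),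
          Finset.sum_const, nsmul_eq_mul]
      have key : ((C i).card : ℝ) * d u j = ((C j).card : ℝ) * d v i := by
        have e1 : (∑ x ∈ C i, d x j) = ((C i).card : ℝ) * d u j := by
          rw [Finset.sum_congr rfl (fun x hx => show d x j = d u j by
            simp only [hd]; exact_mod_cast hequit i j x hx u hu),
            Finset.sum_const, nsmul_eq_mul]
        have e3 : (∑ x ∈ C i, d x j) = ∑ y ∈ C j, d y i := by
          have l : ∀ (x : V) (j' : Fin t),
              d x j' = ∑ y ∈ C j', (if G.Adj x y then (1 : ℝ) else 0) := fun x j' => by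
            rw [Finset.sum_boole]
          simp only [l]
          rw [Finset.sum_comm]
          exact Finset.sum_congr rfl fun y _ => Finset.sum_congr rfl fun x _ =>
            if_congr (G.adj_comm x y) rfl rfl
        rw [← e1, e3, hsum1]
      have hL : (Q * A * Q) u v =
          2 / ((C j).card : ℝ) *
            (2 / ((C i).card : ℝ) * (((C j).card : ℝ) * d v i) - d u j)
          - (2 / ((C i).card : ℝ) * d v i - A u v) := by
        rw [hmulQC (Q*A) hv u, Finset.sum_congr rfl (fun y (_ : y ∈ C j) => hQAu y),
          hQAu v, Finset.sum_sub_distrib, ← Finset.mul_sum, hsum1, hsumA2 u j]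
      rw [hL, hnoflip u v ?_]
      · exact gm_ring_aux _ _ _ _ _ (hnz hu) (hnz hv) key
      rintro ⟨i', ⟨huD, _, _⟩ | ⟨hvD, _, _⟩⟩
      · exact hCD' hu huD
      · exact hCD' hv hvD
  have hc := charpoly_conj_aux Q A hQQ
  rw [hQAQ] at hc
  exact hc.symm
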